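/- Let κ > 0, τ ≠ 0 and H ∈ ℝ, and define e^{2u(x)} = 16(H²+τ²)cosh²x / [4(H²+τ²)cosh²x + (κ−4τ²)]² for x ∈ ℝ. Then 2π ∫_ℝ e^{2u(x)} dx equals (8π/(4H²+κ))·[1 + (4(H²+τ²)/(√(4H²+κ)√(4τ²−κ)))·arctan(√(4τ²−κ)/√(4H²+κ))] when κ − 4τ² < 0, and equals (8π/(4H²+κ))·[1 + (4(H²+τ²)/(√(4H²+κ)√(κ−4τ²)))·artanh(√(κ−4τ²)/√(4H²+κ))] when κ − 4τ² > 0. -/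

import Mathlib

open Real MeasureTheory Set Filter Topology

/-- The inverse hyperbolic tangent. -/
noncomputable def artanh (x : ℝ) : ℝ := (1 / 2) * Real.log ((1 + x) / (1 - x))

lemma key_tanh (x : ℝ) : (1 - Real.tanh x ^ 2) * Real.cosh x ^ 2 = 1 := by
  rw [Real.tanh_eq_sinh_div_cosh]
  have hc : Real.cosh x ≠ 0 := (Real.cosh_pos x).ne'
  have h := Real.cosh_sq_sub_sinh_sq x
  field_simp
  linarith [h]

lemma tanh_sq_lt_one (x : ℝ) : Real.tanh x ^ 2 < 1 := by
  have h := key_tanh x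
  have hc : (1:ℝ) ≤ Real.cosh x ^ 2 := by nlinarith [Real.one_le_cosh x]
  nlinarith

lemma tanh_hasDerivAt (x : ℝ) : HasDerivAt Real.tanh (1 - Real.tanh x ^ 2) x := by
  have hc : Real.cosh x ≠ 0 := (Real.cosh_pos x).ne'
  have h : HasDerivAt (fun y => Real.sinh y / Real.cosh y)
      ((Real.cosh x * Real.cosh x - Real.sinh x * Real.sinh x) / Real.cosh x ^ 2) x :=
    (Real.hasDerivAt_sinh x).div (Real.hasDerivAt_cosh x) hc
  have he : Real.tanh = fun y => Real.sinh y / Real.cosh y :=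
    funext Real.tanh_eq_sinh_div_cosh
  rw [he]
  convert h using 1
  have hk := Real.cosh_sq_sub_sinh_sq x
  field_simp

lemma tanh_eq_exp (x : ℝ) :
    Real.tanh x = (1 - Real.exp (-(2*x))) / (1 + Real.exp (-(2*x))) := by
  rw [Real.tanh_eq_sinh_div_cosh, Real.sinh_eq, Real.cosh_eq]
  have h1 : Real.exp x > 0 := Real.exp_pos x
  have h2 : Real.exp (-x) > 0 := Real.exp_pos _
  have h3 : Real.exp (-(2*x)) = Real.exp (-x) * Real.exp (-x) := by
    rw [← Real.exp_add]; ring_nf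
  have h4 : Real.exp x * Real.exp (-x) = 1 := by
    rw [← Real.exp_add]; simp
  rw [h3]
  field_simp
  nlinarith

lemma tanh_tendsto_top : Tendsto Real.tanh atTop (𝓝 1) := by
  have h : Tendsto (fun x : ℝ => Real.exp (-(2*x))) atTop (𝓝 0) := by
    apply Real.tendsto_exp_atBot.comp
    apply tendsto_neg_atBot_iff.mpr
    exact Tendsto.const_mul_atTop two_pos tendsto_id
  have h2 : Tendsto (fun x : ℝ => (1 - Real.exp (-(2*x))) / (1 + Real.exp (-(2*x))))
      atTop (𝓝 ((1 - 0) / (1 + 0))) :=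
    Tendsto.div (tendsto_const_nhds.sub h) (tendsto_const_nhds.add h) (by norm_num)
  norm_num at h2
  exact h2.congr (fun x => (tanh_eq_exp x).symm)

lemma tanh_tendsto_bot : Tendsto Real.tanh atBot (𝓝 (-1)) := by
  have h := (tanh_tendsto_top.comp tendsto_neg_atBot_atTop).neg
  simp only [Function.comp] at h
  have he : (fun x : ℝ => -Real.tanh (-x)) = Real.tanh := by
    funext x; rw [Real.tanh_neg]; ring
  rwa [he] at h

lemma artanh_neg (y : ℝ) : _root_.artanh (-y) = -_root_.artanh y := by
  unfold _root_.artanh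
  rw [show (1 + -y) / (1 - -y) = ((1 + y)/(1 - y))⁻¹ by rw [inv_div]; ring_nf,
    Real.log_inv]
  ring

lemma artanh_hasDerivAt {y : ℝ} (hy : y ^ 2 < 1) :
    HasDerivAt _root_.artanh (1 / (1 - y ^ 2)) y := by
  have h1 : 0 < 1 + y := by nlinarith
  have h2 : 0 < 1 - y := by nlinarith
  have d1 : HasDerivAt (fun z : ℝ => 1 + z) 1 y := by
    simpa using (hasDerivAt_id y).const_add (1:ℝ)
  have d2 : HasDerivAt (fun z : ℝ => 1 - z) (-1) y := by
    simpa using (hasDerivAt_id y).const_sub (1:ℝ)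
  have dl : HasDerivAt (fun z : ℝ => (1/2) * (Real.log (1 + z) - Real.log (1 - z)))
      ((1/2) * (1/(1+y) - (-1)/(1-y))) y :=
    ((d1.log h1.ne').sub (d2.log h2.ne')).const_mul (1/2)
  have he : (fun z : ℝ => (1/2) * (Real.log (1 + z) - Real.log (1 - z))) =ᶠ[𝓝 y] _root_.artanh := by
    filter_upwards [Ioo_mem_nhds (by linarith : -1 < y) (by linarith : y < 1)] with z hz
    unfold _root_.artanh
    rw [Real.log_div (by nlinarith [hz.1, hz.2] : (1:ℝ) + z ≠ 0)
      (by nlinarith [hz.2] : (1:ℝ) - z ≠ 0)]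
  have hd := dl.congr_of_eventuallyEq he.symm
  refine hd.congr_deriv ?_
  have h3 : 1 - y ^ 2 ≠ 0 := by nlinarith
  field_simp
  ring

lemma integral_neg_case (a m : ℝ) (ha : 0 < a) (hm : 0 < m) (hb : 0 < 4*a - m) :
    (∫ x : ℝ, 16*a*Real.cosh x ^ 2 / (4*a*Real.cosh x ^ 2 - m) ^ 2)
      = 4/(4*a-m) * (1 + 4*a/(Real.sqrt (4*a-m) * Real.sqrt m)
          * Real.arctan (Real.sqrt m / Real.sqrt (4*a-m))) := by
  set b : ℝ := 4*a - m with hbdef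
  set sb : ℝ := Real.sqrt b with hsbdef
  set sm : ℝ := Real.sqrt m with hsmdef
  have hsb : 0 < sb := Real.sqrt_pos.mpr hb
  have hsm : 0 < sm := Real.sqrt_pos.mpr hm
  have hsb2 : sb ^ 2 = b := Real.sq_sqrt hb.le
  have hsm2 : sm ^ 2 = m := Real.sq_sqrt hm.le
  have haeq : a = (sb^2 + sm^2)/4 := by rw [hsb2, hsm2, hbdef]; ring
  have hdenpos : ∀ t : ℝ, 0 < b + m*t^2 := fun t => by positivity
  -- the antiderivative
  set G : ℝ → ℝ := fun t => 16*a*(t/(2*b*(b + m*t^2))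
      + 1/(2*b*(sb*sm)) * Real.arctan (sm/sb*t)) with hGdef
  have hd : ∀ x : ℝ, HasDerivAt (fun y : ℝ => G (Real.tanh y))
      (16*a*Real.cosh x ^ 2 / (4*a*Real.cosh x ^ 2 - m) ^ 2) x := by
    intro x
    have ht := tanh_hasDerivAt x
    have hne : 2*b*(b + m*Real.tanh x^2) ≠ 0 := by positivity
    have h2 : HasDerivAt (fun y : ℝ => 2*b*(b + m*Real.tanh y^2))
        (2*b*(m*((2:ℕ)*Real.tanh x^(2-1)*(1 - Real.tanh x^2)))) x :=
      (((ht.pow 2).const_mul m).const_add b).const_mul (2*b)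
    have h1 := ht.div h2 hne
    have harc := (Real.hasDerivAt_arctan (sm/sb*Real.tanh x)).comp x (ht.const_mul (sm/sb))
    have hsum := (h1.add (harc.const_mul (1/(2*b*(sb*sm))))).const_mul (16*a)
    apply hsum.congr_deriv
    have key := key_tanh x
    have ht2 := _root_.tanh_sq_lt_one x
    have h1t : (0:ℝ) < 1 - Real.tanh x^2 := by nlinarith
    have hcne : Real.cosh x ≠ 0 := (Real.cosh_pos x).ne'
    have hdne : b + m*Real.tanh x^2 ≠ 0 := (hdenpos _).ne'
    have hstep : 4*a*Real.cosh x^2 - m = (b + m*Real.tanh x^2)*Real.cosh x^2 := by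
      rw [hbdef]; linear_combination m * key
    have hinv : (1 - Real.tanh x^2) = 1/Real.cosh x^2 := by
      field_simp; linear_combination key
    have hfx : 16*a*Real.cosh x ^2/(4*a*Real.cosh x^2 - m)^2
        = 16*a*(1 - Real.tanh x^2)/(b + m*Real.tanh x^2)^2 := by
      rw [hstep, hinv, mul_pow]
      field_simp
    rw [hfx]
    have hbeq : b = sb^2 := hsb2.symm
    have hmeq : m = sm^2 := hsm2.symm
    rw [haeq, hbeq, hmeq]
    have hne1 : sb^2 + sm^2*Real.tanh x^2 ≠ 0 := by positivity
    have hane : 1 + (sm/sb*Real.tanh x)^2 ≠ 0 := by positivity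
    field_simp
    ring
  -- continue
  have hpos : ∀ x : ℝ, 0 ≤ 16*a*Real.cosh x ^ 2 / (4*a*Real.cosh x ^ 2 - m) ^ 2 :=
    fun x => div_nonneg (by positivity) (sq_nonneg _)
  have hGcont : Continuous G := by
    rw [hGdef]
    apply continuous_const.mul
    apply Continuous.add
    · exact continuous_id.div
        (continuous_const.mul (continuous_const.add (continuous_const.mul (continuous_pow 2))))
        (fun t => (mul_pos (by linarith) (hdenpos t)).ne')
    · exact continuous_const.mul
        (Real.continuous_arctan.comp (continuous_const.mul continuous_id))
  have htop : Tendsto (fun y : ℝ => G (Real.tanh y)) atTop (𝓝 (G 1)) :=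
    (hGcont.continuousAt.tendsto).comp tanh_tendsto_top
  have hbot : Tendsto (fun y : ℝ => G (Real.tanh y)) atBot (𝓝 (G (-1))) :=
    (hGcont.continuousAt.tendsto).comp tanh_tendsto_bot
  have hIoi : IntegrableOn
      (fun x : ℝ => 16*a*Real.cosh x ^ 2 / (4*a*Real.cosh x ^ 2 - m) ^ 2) (Ioi 0) :=
    integrableOn_Ioi_deriv_of_nonneg' (fun x _ => hd x) (fun x _ => hpos x) htop
  have hIio : IntegrableOn
      (fun x : ℝ => 16*a*Real.cosh x ^ 2 / (4*a*Real.cosh x ^ 2 - m) ^ 2) (Iio 0) := by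
    have h := (MeasurePreserving.integrableOn_comp_preimage
      (Measure.measurePreserving_neg (volume : Measure ℝ))
      (Homeomorph.neg ℝ).measurableEmbedding).mpr hIoi
    have hpre : (Neg.neg ⁻¹' Ioi (0:ℝ)) = Iio 0 := by
      ext y; simp
    have hcomp : ((fun x : ℝ => 16*a*Real.cosh x ^ 2 / (4*a*Real.cosh x ^ 2 - m) ^ 2)
        ∘ Neg.neg) = fun x : ℝ => 16*a*Real.cosh x ^ 2 / (4*a*Real.cosh x ^ 2 - m) ^ 2 := by
      funext y; simp [Function.comp, Real.cosh_neg]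
    rwa [hcomp, hpre] at h
  have hIic : IntegrableOn
      (fun x : ℝ => 16*a*Real.cosh x ^ 2 / (4*a*Real.cosh x ^ 2 - m) ^ 2) (Iic 0) :=
    Iff.mpr integrableOn_Iic_iff_integrableOn_Iio hIio
  have hint : Integrable
      (fun x : ℝ => 16*a*Real.cosh x ^ 2 / (4*a*Real.cosh x ^ 2 - m) ^ 2) := by
    rw [← integrableOn_univ, ← Set.Iic_union_Ioi (a := (0:ℝ))]
    exact hIic.union hIoi
  have hEq := MeasureTheory.integral_of_hasDerivAt_of_tendsto hd hint hbot htop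
  rw [hEq, hGdef]
  have harcneg : Real.arctan (sm/sb*(-1)) = - Real.arctan (sm/sb) := by
    rw [show sm/sb*(-1) = -(sm/sb) by ring, Real.arctan_neg]
  simp only [harcneg, mul_one]
  rw [hbdef]
  have hbne : (4*a - m) ≠ 0 := hb.ne'
  field_simp
  ring

lemma integral_pos_case (a c : ℝ) (ha : 0 < a) (hc : 0 < c) :
    (∫ x : ℝ, 16*a*Real.cosh x ^ 2 / (4*a*Real.cosh x ^ 2 + c) ^ 2)
      = 4/(4*a+c) * (1 + 4*a/(Real.sqrt (4*a+c) * Real.sqrt c)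
          * _root_.artanh (Real.sqrt c / Real.sqrt (4*a+c))) := by
  set b : ℝ := 4*a + c with hbdef
  have hb : 0 < b := by positivity
  set sb : ℝ := Real.sqrt b with hsbdef
  set sc : ℝ := Real.sqrt c with hscdef
  have hsb : 0 < sb := Real.sqrt_pos.mpr hb
  have hsc : 0 < sc := Real.sqrt_pos.mpr hc
  have hsb2 : sb ^ 2 = b := Real.sq_sqrt hb.le
  have hsc2 : sc ^ 2 = c := Real.sq_sqrt hc.le
  have haeq : a = (sb^2 - sc^2)/4 := by rw [hsb2, hsc2, hbdef]; ring
  have hcb : c < b := by rw [hbdef]; linarith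
  set G : ℝ → ℝ := fun t => 16*a*(t/(2*b*(b - c*t^2))
      + 1/(2*b*(sb*sc)) * _root_.artanh (sc/sb*t)) with hGdef
  have hsq : (sc/sb)^2 = c/b := by rw [div_pow, hsc2, hsb2]
  have hd : ∀ x : ℝ, HasDerivAt (fun y : ℝ => G (Real.tanh y))
      (16*a*Real.cosh x ^ 2 / (4*a*Real.cosh x ^ 2 + c) ^ 2) x := by
    intro x
    have ht := tanh_hasDerivAt x
    have ht2 := _root_.tanh_sq_lt_one x
    have hdenpos : 0 < b - c*Real.tanh x^2 := by nlinarith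
    have hne : 2*b*(b - c*Real.tanh x^2) ≠ 0 := (mul_pos (by linarith) hdenpos).ne'
    have h2 : HasDerivAt (fun y : ℝ => 2*b*(b - c*Real.tanh y^2))
        (2*b*(-(c*((2:ℕ)*Real.tanh x^(2-1)*(1 - Real.tanh x^2))))) x := by
      exact ((((ht.pow 2).const_mul c).neg.const_add b).const_mul (2*b))
    have h1 := ht.div h2 hne
    have hy : (sc/sb*Real.tanh x)^2 < 1 := by
      rw [mul_pow, hsq, div_mul_eq_mul_div, div_lt_one hb]
      nlinarith
    have harc := (_root_.artanh_hasDerivAt hy).comp x (ht.const_mul (sc/sb))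
    have hsum := (h1.add (harc.const_mul (1/(2*b*(sb*sc))))).const_mul (16*a)
    apply hsum.congr_deriv
    have key := key_tanh x
    have h1t : (0:ℝ) < 1 - Real.tanh x^2 := by nlinarith
    have hcne : Real.cosh x ≠ 0 := (Real.cosh_pos x).ne'
    have hdne : b - c*Real.tanh x^2 ≠ 0 := hdenpos.ne'
    have hstep : 4*a*Real.cosh x^2 + c = (b - c*Real.tanh x^2)*Real.cosh x^2 := by
      rw [hbdef]; linear_combination (-c) * key
    have hinv : (1 - Real.tanh x^2) = 1/Real.cosh x^2 := by
      field_simp; linear_combination key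
    have hfx : 16*a*Real.cosh x ^2/(4*a*Real.cosh x^2 + c)^2
        = 16*a*(1 - Real.tanh x^2)/(b - c*Real.tanh x^2)^2 := by
      rw [hstep, hinv, mul_pow]
      field_simp
    rw [hfx]
    have hne1 : sb^2 - sc^2*Real.tanh x^2 ≠ 0 := by
      rw [hsb2, hsc2]; exact hdenpos.ne'
    have h5 : 1 - (sc/sb*Real.tanh x)^2 = (sb^2 - sc^2*Real.tanh x^2)/sb^2 := by
      field_simp
    rw [h5]
    have hbeq : b = sb^2 := hsb2.symm
    have hceq : c = sc^2 := hsc2.symm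
    rw [haeq, hbeq, hceq]
    field_simp
    ring
  have hpos : ∀ x : ℝ, 0 ≤ 16*a*Real.cosh x ^ 2 / (4*a*Real.cosh x ^ 2 + c) ^ 2 :=
    fun x => div_nonneg (by positivity) (sq_nonneg _)
  have hGc : ∀ t0 : ℝ, t0^2 = 1 → ContinuousAt G t0 := by
    intro t0 ht0
    have hden0 : (2*b*(b - c*t0^2)) ≠ 0 := by
      rw [ht0]
      nlinarith
    have hy : (sc/sb*t0)^2 < 1 := by
      rw [mul_pow, hsq, ht0, mul_one, div_lt_one hb]; exact hcb
    have c1 : ContinuousAt (fun t : ℝ => t/(2*b*(b - c*t^2))) t0 :=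
      ContinuousAt.div continuousAt_id
        ((continuous_const.mul (continuous_const.sub
          (continuous_const.mul (continuous_pow 2)))).continuousAt) hden0
    have c2 : ContinuousAt (fun t : ℝ => _root_.artanh (sc/sb*t)) t0 :=
      (_root_.artanh_hasDerivAt hy).continuousAt.comp
        ((continuous_const.mul continuous_id).continuousAt)
    rw [hGdef]
    exact continuousAt_const.mul (c1.add (continuousAt_const.mul c2))
  have htop : Tendsto (fun y : ℝ => G (Real.tanh y)) atTop (𝓝 (G 1)) :=
    ((hGc 1 (by norm_num)).tendsto).comp tanh_tendsto_top
  have hbot : Tendsto (fun y : ℝ => G (Real.tanh y)) atBot (𝓝 (G (-1))) :=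
    ((hGc (-1) (by norm_num)).tendsto).comp tanh_tendsto_bot
  have hIoi : IntegrableOn
      (fun x : ℝ => 16*a*Real.cosh x ^ 2 / (4*a*Real.cosh x ^ 2 + c) ^ 2) (Ioi 0) :=
    integrableOn_Ioi_deriv_of_nonneg' (fun x _ => hd x) (fun x _ => hpos x) htop
  have hIio : IntegrableOn
      (fun x : ℝ => 16*a*Real.cosh x ^ 2 / (4*a*Real.cosh x ^ 2 + c) ^ 2) (Iio 0) := by
    have h := (MeasurePreserving.integrableOn_comp_preimage
      (Measure.measurePreserving_neg (volume : Measure ℝ))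
      (Homeomorph.neg ℝ).measurableEmbedding).mpr hIoi
    have hpre : (Neg.neg ⁻¹' Ioi (0:ℝ)) = Iio 0 := by
      ext y; simp
    have hcomp : ((fun x : ℝ => 16*a*Real.cosh x ^ 2 / (4*a*Real.cosh x ^ 2 + c) ^ 2)
        ∘ Neg.neg) = fun x : ℝ => 16*a*Real.cosh x ^ 2 / (4*a*Real.cosh x ^ 2 + c) ^ 2 := by
      funext y; simp [Function.comp, Real.cosh_neg]
    rwa [hcomp, hpre] at h
  have hIic : IntegrableOn
      (fun x : ℝ => 16*a*Real.cosh x ^ 2 / (4*a*Real.cosh x ^ 2 + c) ^ 2) (Iic 0) :=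
    Iff.mpr integrableOn_Iic_iff_integrableOn_Iio hIio
  have hint : Integrable
      (fun x : ℝ => 16*a*Real.cosh x ^ 2 / (4*a*Real.cosh x ^ 2 + c) ^ 2) := by
    rw [← integrableOn_univ, ← Set.Iic_union_Ioi (a := (0:ℝ))]
    exact hIic.union hIoi
  have hEq := MeasureTheory.integral_of_hasDerivAt_of_tendsto hd hint hbot htop
  rw [hEq, hGdef]
  have harcneg : _root_.artanh (sc/sb*(-1)) = - _root_.artanh (sc/sb) := by
    rw [show sc/sb*(-1) = -(sc/sb) by ring, _root_.artanh_neg]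
  simp only [harcneg, mul_one]
  rw [hbdef]
  have hbne : (4*a + c) ≠ 0 := hb.ne'
  field_simp
  ring


/-- Area of the CMC `H` sphere in `E(κ,τ)`: the integral of the conformal
factor over `ℝ × [0,2π]` has the stated closed form, according to the sign of
`κ − 4τ²`. -/
theorem area_cmc_sphere (κ τ H : ℝ) (hκ : 0 < κ) (hτ : τ ≠ 0) :
    (κ - 4 * τ ^ 2 < 0 →
      2 * Real.pi * ∫ x : ℝ,
          16 * (H ^ 2 + τ ^ 2) * Real.cosh x ^ 2 /
            (4 * (H ^ 2 + τ ^ 2) * Real.cosh x ^ 2 + (κ - 4 * τ ^ 2)) ^ 2 =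
        (8 * Real.pi / (4 * H ^ 2 + κ)) *
          (1 + (4 * (H ^ 2 + τ ^ 2) /
              (Real.sqrt (4 * H ^ 2 + κ) * Real.sqrt (4 * τ ^ 2 - κ))) *
            Real.arctan (Real.sqrt (4 * τ ^ 2 - κ) / Real.sqrt (4 * H ^ 2 + κ)))) ∧
    (0 < κ - 4 * τ ^ 2 →
      2 * Real.pi * ∫ x : ℝ,
          16 * (H ^ 2 + τ ^ 2) * Real.cosh x ^ 2 /
            (4 * (H ^ 2 + τ ^ 2) * Real.cosh x ^ 2 + (κ - 4 * τ ^ 2)) ^ 2 =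
        (8 * Real.pi / (4 * H ^ 2 + κ)) *
          (1 + (4 * (H ^ 2 + τ ^ 2) /
              (Real.sqrt (4 * H ^ 2 + κ) * Real.sqrt (κ - 4 * τ ^ 2))) *
            _root_.artanh (Real.sqrt (κ - 4 * τ ^ 2) / Real.sqrt (4 * H ^ 2 + κ)))) := by
  have ha : 0 < H ^ 2 + τ ^ 2 := by
    have h2 : 0 < τ ^ 2 := lt_of_le_of_ne (sq_nonneg τ) (Ne.symm (pow_ne_zero 2 hτ))
    nlinarith [sq_nonneg H]
  constructor
  · intro hlt
    have hm : 0 < 4 * τ ^ 2 - κ := by linarith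
    have hb : 0 < 4 * (H ^ 2 + τ ^ 2) - (4 * τ ^ 2 - κ) := by nlinarith
    have hI := integral_neg_case (H ^ 2 + τ ^ 2) (4 * τ ^ 2 - κ) ha hm hb
    have hmatch : (∫ x : ℝ, 16 * (H ^ 2 + τ ^ 2) * Real.cosh x ^ 2 /
            (4 * (H ^ 2 + τ ^ 2) * Real.cosh x ^ 2 + (κ - 4 * τ ^ 2)) ^ 2)
        = ∫ x : ℝ, 16 * (H ^ 2 + τ ^ 2) * Real.cosh x ^ 2 /
            (4 * (H ^ 2 + τ ^ 2) * Real.cosh x ^ 2 - (4 * τ ^ 2 - κ)) ^ 2 := by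
      congr 1
      funext x
      ring_nf
    rw [hmatch, hI,
      show 4 * (H ^ 2 + τ ^ 2) - (4 * τ ^ 2 - κ) = 4 * H ^ 2 + κ by ring]
    ring
  · intro hgt
    have hI := integral_pos_case (H ^ 2 + τ ^ 2) (κ - 4 * τ ^ 2) ha hgt
    rw [hI, show 4 * (H ^ 2 + τ ^ 2) + (κ - 4 * τ ^ 2) = 4 * H ^ 2 + κ by ring]
    ring
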